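/- Let (x₁,y₁),…,(x_N,y_N) be training data with xₙ ∈ ℝ^p and yₙ ∈ {−1,+1}, let C ≥ 0, d ∈ [0, 1/2] and μ > 0, and let R be the regularized double-ramp risk. If (w*, b*, ρ*) is a global minimizer of R over ℝ^p × ℝ × ℝ, then (w*, b*, |ρ*|) is also a global minimizer of R; in particular, the minimum of R is attained at a point whose bandwidth parameter is non-negative. -/

import Mathlib

/-- The double ramp loss on margin `t` with rejection cost `d`, slope `μ`, bandwidth `ρ`. -/
noncomputable def LDR (d μ ρ t : ℝ) : ℝ :=
  d / μ * (max 0 (μ - t + ρ) - max 0 (-μ^2 - t + ρ))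
    + (1 - d) / μ * (max 0 (μ - t - ρ) - max 0 (-μ^2 - t - ρ))

/-- The regularized double-ramp risk for training data `x, y`. -/
noncomputable def regRisk {N p : ℕ} (x : Fin N → EuclideanSpace ℝ (Fin p))
    (y : Fin N → ℝ) (C d μ : ℝ) (w : EuclideanSpace ℝ (Fin p)) (b ρ : ℝ) : ℝ :=
  (1/2) * ‖w‖^2 + C * ∑ n, LDR d μ ρ (y n * ((inner ℝ w (x n) : ℝ) + b))

lemma ramp_mono (a b h : ℝ) (hab : a ≤ b) (hh : 0 ≤ h) :
    max 0 (a + h) - max 0 a ≤ max 0 (b + h) - max 0 b := by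
  rcases max_cases 0 (a + h) with ⟨h1, h1'⟩ | ⟨h1, h1'⟩ <;>
  rcases max_cases 0 a with ⟨h2, h2'⟩ | ⟨h2, h2'⟩ <;>
  rcases max_cases 0 (b + h) with ⟨h3, h3'⟩ | ⟨h3, h3'⟩ <;>
  rcases max_cases 0 b with ⟨h4, h4'⟩ | ⟨h4, h4'⟩ <;> linarith

lemma LDR_abs_le (d μ ρ t : ℝ) (hd0 : 0 ≤ d) (hd1 : d ≤ 1/2) (hμ : 0 < μ)
    (hρ : ρ ≤ 0) : LDR d μ (-ρ) t ≤ LDR d μ ρ t := by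
  have hA : max 0 (-μ^2 - t + (-ρ)) - max 0 (-μ^2 - t + ρ)
      ≤ max 0 (μ - t + (-ρ)) - max 0 (μ - t + ρ) := by
    have := ramp_mono (-μ^2 - t + ρ) (μ - t + ρ) (-ρ - ρ) (by nlinarith) (by linarith)
    have e1 : -μ^2 - t + ρ + (-ρ - ρ) = -μ^2 - t + (-ρ) := by ring
    have e2 : μ - t + ρ + (-ρ - ρ) = μ - t + (-ρ) := by ring
    rw [e1, e2] at this
    linarith
  set Aρ := max 0 (μ - t + ρ) - max 0 (-μ^2 - t + ρ) with hAρ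
  set Anρ := max 0 (μ - t + (-ρ)) - max 0 (-μ^2 - t + (-ρ)) with hAnρ
  have hAA : Aρ ≤ Anρ := by simp only [hAρ, hAnρ]; linarith
  have key : 0 ≤ (1 - 2*d) * (Anρ - Aρ) / μ :=
    div_nonneg (mul_nonneg (by linarith) (by linarith)) hμ.le
  have eq1 : LDR d μ ρ t - LDR d μ (-ρ) t = (1 - 2*d) * (Anρ - Aρ) / μ := by
    simp only [LDR, hAρ, hAnρ]
    have e3 : ∀ s : ℝ, μ - t - s = μ - t + (-s) := fun s => by ring
    have e4 : ∀ s : ℝ, -μ^2 - t - s = -μ^2 - t + (-s) := fun s => by ring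
    rw [e3 ρ, e4 ρ, e3 (-ρ), e4 (-ρ), neg_neg]
    field_simp
    ring
  linarith

theorem stmt_8 {N p : ℕ} (x : Fin N → EuclideanSpace ℝ (Fin p)) (y : Fin N → ℝ)
    (hy : ∀ n, y n = -1 ∨ y n = 1) (C d μ : ℝ) (hC : 0 ≤ C)
    (hd : d ∈ Set.Icc (0 : ℝ) (1/2)) (hμ : 0 < μ)
    (wstar : EuclideanSpace ℝ (Fin p)) (bstar ρstar : ℝ)
    (hmin : ∀ (w : EuclideanSpace ℝ (Fin p)) (b ρ : ℝ),
      regRisk x y C d μ wstar bstar ρstar ≤ regRisk x y C d μ w b ρ) :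
    ∀ (w : EuclideanSpace ℝ (Fin p)) (b ρ : ℝ),
      regRisk x y C d μ wstar bstar |ρstar| ≤ regRisk x y C d μ w b ρ := by
  have step : regRisk x y C d μ wstar bstar |ρstar| ≤
      regRisk x y C d μ wstar bstar ρstar := by
    rcases le_or_gt 0 ρstar with h | h
    · rw [abs_of_nonneg h]
    · rw [abs_of_neg h]
      unfold regRisk
      gcongr with n _
      exact LDR_abs_le d μ ρstar _ hd.1 hd.2 hμ h.le
  intro w b ρ
  exact step.trans (hmin w b ρ)
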